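/- (Mortality Theorem) In Mem⁰, suppose m appears at least twice on the frontier: G(n_∞) = G(n'_∞) = m with n < n'. Then for all a > 2n' and all k ≥ 1, G(a, k) ≠ m. -/
import Mathlib


/-- Grundy value of Mem⁰: options of (n,k) are (n-a, a) for 1 ≤ a ≤ n, a ≠ k. -/
noncomputable def memZeroG (n k : ℕ) : ℕ :=
  sInf {v : ℕ | v ∉ (((Finset.Icc 1 n).erase k).attach.image
    (fun a => memZeroG (n - a.1) a.1))}
termination_by n
decreasing_by
  have h := Finset.mem_Icc.mp (Finset.mem_of_mem_erase a.2)
  omega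

lemma memZeroG_mem_iff (n k x : ℕ) :
    x ∈ (((Finset.Icc 1 n).erase k).attach.image
      (fun a => memZeroG (n - a.1) a.1)) ↔
    ∃ b, (b ∈ Finset.Icc 1 n ∧ b ≠ k) ∧ memZeroG (n - b) b = x := by
  simp [Finset.mem_image, Finset.mem_erase, and_comm]

lemma memZeroG_not_mem (n k : ℕ) :
    memZeroG n k ∉ (((Finset.Icc 1 n).erase k).attach.image
      (fun a => memZeroG (n - a.1) a.1)) := by
  rw [memZeroG]
  exact Nat.sInf_mem (Set.Infinite.nonempty
    (Set.Finite.infinite_compl (Finset.finite_toSet _)))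

lemma memZeroG_eq_of_gt (n k : ℕ) (hk : n < k) :
    memZeroG n k = memZeroG n (n + 1) := by
  rw [memZeroG, memZeroG]
  have : (((Finset.Icc 1 n).erase k).attach.image
      (fun a => memZeroG (n - a.1) a.1)) =
      (((Finset.Icc 1 n).erase (n + 1)).attach.image
      (fun a => memZeroG (n - a.1) a.1)) := by
    ext x
    rw [memZeroG_mem_iff, memZeroG_mem_iff]
    constructor <;> rintro ⟨b, ⟨hb, hbk⟩, hx⟩ <;>
      exact ⟨b, ⟨hb, by have := Finset.mem_Icc.mp hb; omega⟩, hx⟩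
  rw [this]

/-- Mortality Theorem: if m appears at least twice on the frontier, at n < n',
then m never occurs as a Grundy value for pile sizes a > 2n'. -/
theorem memZero_mortality (n n' m : ℕ) (hnn' : n < n')
    (h : memZeroG n (n + 1) = m) (h' : memZeroG n' (n' + 1) = m) :
    ∀ a : ℕ, 2 * n' < a → ∀ k : ℕ, 1 ≤ k → memZeroG a k ≠ m := by
  intro a ha k hk hcon
  have hnot := memZeroG_not_mem a k
  rw [hcon] at hnot
  apply hnot
  rw [memZeroG_mem_iff]
  by_cases hb : a - n = k
  · refine ⟨a - n', ⟨Finset.mem_Icc.mpr (by omega), by omega⟩, ?_⟩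
    have h1 : a - (a - n') = n' := by omega
    rw [h1, memZeroG_eq_of_gt n' (a - n') (by omega), h']
  · refine ⟨a - n, ⟨Finset.mem_Icc.mpr (by omega), hb⟩, ?_⟩
    have h1 : a - (a - n) = n := by omega
    rw [h1, memZeroG_eq_of_gt n (a - n) (by omega), h]
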